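/- arXiv:1409.3271 — 7 statements merged into one kernel-verified Lean document; each statement's English description precedes it below -/
import Mathlib

section
/- Let t, q ∈ ℝ and α > −q²/2, and set c₁ = e^{−2t}√((8/3)(α + q²/2)), c₂ = α, c₃ = (e^{2t}/6)√((8/3)(α + q²/2))(α − q²), and c₄ = e^{4t}(α − q²)²/36. Define F(r) = e^{−4t} + c₁/r + c₂/r² + c₃/r³ + c₄/r⁴ for r > 0. Then for every r > 0 with F(r) ≠ 0, F''(r) + (2/r)F'(r) = −q²/r⁴ + (3/4)·F'(r)²/F(r). -/
private lemma hasDerivAt_div_pow (c : ℝ) (n : ℕ) {x : ℝ} (hx : x ≠ 0) :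
    HasDerivAt (fun r : ℝ => c / r ^ (n + 1)) (-((n : ℝ) + 1) * c / x ^ (n + 2)) x := by
  have h := ((hasDerivAt_pow (n + 1) x).inv (pow_ne_zero _ hx)).const_mul c
  simp only [Nat.add_sub_cancel] at h
  simp only [div_eq_mul_inv]
  have hd : -((n : ℝ) + 1) * c * (x ^ (n + 2))⁻¹
      = c * (-(((n : ℕ) + 1 : ℕ) * x ^ n) / (x ^ (n + 1)) ^ 2) := by
    field_simp
    push_cast; ring
  rw [hd]
  exact h

private lemma hasDerivAt_expansion (e c₁ c₂ c₃ c₄ : ℝ) {x : ℝ} (hx : x ≠ 0) :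
    HasDerivAt (fun r : ℝ => e + c₁ / r + c₂ / r ^ 2 + c₃ / r ^ 3 + c₄ / r ^ 4)
      (-c₁ / x ^ 2 - 2 * c₂ / x ^ 3 - 3 * c₃ / x ^ 4 - 4 * c₄ / x ^ 5) x := by
  have h1 := hasDerivAt_div_pow c₁ 0 hx
  have h2 := hasDerivAt_div_pow c₂ 1 hx
  have h3 := hasDerivAt_div_pow c₃ 2 hx
  have h4 := hasDerivAt_div_pow c₄ 3 hx
  have h := (((((hasDerivAt_const x e).add h1).add h2).add h3).add h4)
  norm_num at h
  refine h.congr_deriv ?_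
  ring

set_option maxHeartbeats 1000000 in
private lemma key_identity (s q α E r : ℝ) (hE : E ≠ 0) (hr : r ≠ 0)
    (hs : s ^ 2 = 8 / 3 * (α + q ^ 2 / 2))
    (hF : (E ^ 2)⁻¹ + E⁻¹ * s / r + α / r ^ 2 + E / 6 * s * (α - q ^ 2) / r ^ 3
        + E ^ 2 * (α - q ^ 2) ^ 2 / 36 / r ^ 4 ≠ 0) :
    2 * (E⁻¹ * s) / r ^ 3 + 6 * α / r ^ 4 + 12 * (E / 6 * s * (α - q ^ 2)) / r ^ 5
        + 20 * (E ^ 2 * (α - q ^ 2) ^ 2 / 36) / r ^ 6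
      + 2 / r * (-(E⁻¹ * s) / r ^ 2 - 2 * α / r ^ 3 - 3 * (E / 6 * s * (α - q ^ 2)) / r ^ 4
        - 4 * (E ^ 2 * (α - q ^ 2) ^ 2 / 36) / r ^ 5)
      = -q ^ 2 / r ^ 4
        + 3 / 4 * (-(E⁻¹ * s) / r ^ 2 - 2 * α / r ^ 3 - 3 * (E / 6 * s * (α - q ^ 2)) / r ^ 4
            - 4 * (E ^ 2 * (α - q ^ 2) ^ 2 / 36) / r ^ 5) ^ 2
          / ((E ^ 2)⁻¹ + E⁻¹ * s / r + α / r ^ 2 + E / 6 * s * (α - q ^ 2) / r ^ 3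
            + E ^ 2 * (α - q ^ 2) ^ 2 / 36 / r ^ 4) := by
  have hα : α = 3 / 8 * s ^ 2 - q ^ 2 / 2 := by linarith
  subst hα
  set a : ℝ := 3 / 8 * s ^ 2 - q ^ 2 / 2 with ha
  set N : ℝ := -(E⁻¹ * s) / r ^ 2 - 2 * a / r ^ 3 - 3 * (E / 6 * s * (a - q ^ 2)) / r ^ 4
      - 4 * (E ^ 2 * (a - q ^ 2) ^ 2 / 36) / r ^ 5 with hN
  set D : ℝ := (E ^ 2)⁻¹ + E⁻¹ * s / r + a / r ^ 2 + E / 6 * s * (a - q ^ 2) / r ^ 3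
      + E ^ 2 * (a - q ^ 2) ^ 2 / 36 / r ^ 4 with hD
  have key : 3 / 4 * N ^ 2 / D
      = (2 * (E⁻¹ * s) / r ^ 3 + 6 * a / r ^ 4 + 12 * (E / 6 * s * (a - q ^ 2)) / r ^ 5
          + 20 * (E ^ 2 * (a - q ^ 2) ^ 2 / 36) / r ^ 6 + 2 / r * N) + q ^ 2 / r ^ 4 := by
    rw [div_eq_iff hF, hN, hD, ha]
    field_simp
    ring
  rw [key]
  ring

set_option maxHeartbeats 1000000 in
/-- The explicit four-term expansion `F(r) = e^{−4t} + c₁/r + c₂/r² + c₃/r³ + c₄/r⁴`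
with the stated coefficients is an exact solution of the radial ODE
`F'' + (2/r)F' = −q²/r⁴ + (3/4)F'²/F` wherever `F` does not vanish. -/
theorem radial_expansion_solves_ode (t q α : ℝ) (hα : -q ^ 2 / 2 < α) :
    let c₁ : ℝ := Real.exp (-2 * t) * Real.sqrt ((8 / 3) * (α + q ^ 2 / 2))
    let c₂ : ℝ := α
    let c₃ : ℝ := (Real.exp (2 * t) / 6) * Real.sqrt ((8 / 3) * (α + q ^ 2 / 2)) * (α - q ^ 2)
    let c₄ : ℝ := Real.exp (4 * t) * (α - q ^ 2) ^ 2 / 36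
    let F : ℝ → ℝ := fun r =>
      Real.exp (-4 * t) + c₁ / r + c₂ / r ^ 2 + c₃ / r ^ 3 + c₄ / r ^ 4
    ∀ r : ℝ, 0 < r → F r ≠ 0 →
      deriv (deriv F) r + (2 / r) * deriv F r =
        -q ^ 2 / r ^ 4 + (3 / 4) * (deriv F r) ^ 2 / F r := by
  intro c₁ c₂ c₃ c₄ F r hr hF
  have hr0 : r ≠ 0 := ne_of_gt hr
  set s : ℝ := Real.sqrt ((8 / 3) * (α + q ^ 2 / 2)) with hs_def
  have hs : s ^ 2 = (8 / 3) * (α + q ^ 2 / 2) :=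
    Real.sq_sqrt (by nlinarith)
  have hα' : α = 3 / 8 * s ^ 2 - q ^ 2 / 2 := by nlinarith
  -- first derivative
  have hF' : ∀ x : ℝ, x ≠ 0 → deriv F x =
      -c₁ / x ^ 2 - 2 * c₂ / x ^ 3 - 3 * c₃ / x ^ 4 - 4 * c₄ / x ^ 5 := by
    intro x hx
    exact (hasDerivAt_expansion (Real.exp (-4 * t)) c₁ c₂ c₃ c₄ hx).deriv
  -- second derivative
  have hG : deriv F =ᶠ[nhds r] fun x =>
      -c₁ / x ^ 2 - 2 * c₂ / x ^ 3 - 3 * c₃ / x ^ 4 - 4 * c₄ / x ^ 5 := by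
    filter_upwards [eventually_ne_nhds hr0] with x hx
    exact hF' x hx
  have hF'' : deriv (deriv F) r =
      2 * c₁ / r ^ 3 + 6 * c₂ / r ^ 4 + 12 * c₃ / r ^ 5 + 20 * c₄ / r ^ 6 := by
    rw [hG.deriv_eq]
    have h2 := hasDerivAt_div_pow (-c₁) 1 hr0
    have h3 := hasDerivAt_div_pow (-2 * c₂) 2 hr0
    have h4 := hasDerivAt_div_pow (-3 * c₃) 3 hr0
    have h5 := hasDerivAt_div_pow (-4 * c₄) 4 hr0
    have heq : (fun x : ℝ =>
        -c₁ / x ^ 2 - 2 * c₂ / x ^ 3 - 3 * c₃ / x ^ 4 - 4 * c₄ / x ^ 5)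
        = fun x : ℝ =>
        -c₁ / x ^ (1 + 1) + -2 * c₂ / x ^ (2 + 1) + -3 * c₃ / x ^ (3 + 1)
          + -4 * c₄ / x ^ (4 + 1) := by
      funext x; norm_num; ring
    have h : HasDerivAt (fun x : ℝ =>
        -c₁ / x ^ 2 - 2 * c₂ / x ^ 3 - 3 * c₃ / x ^ 4 - 4 * c₄ / x ^ 5)
        (2 * c₁ / r ^ 3 + 6 * c₂ / r ^ 4 + 12 * c₃ / r ^ 5 + 20 * c₄ / r ^ 6) r := by
      rw [heq]
      have := ((h2.add h3).add h4).add h5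
      refine this.congr_deriv ?_
      push_cast; ring
    exact h.deriv
  rw [hF'', hF' r hr0]
  -- exponential relations
  set E : ℝ := Real.exp (2 * t) with hE_def
  have hE0 : E ≠ 0 := Real.exp_ne_zero _
  have hEm2 : Real.exp (-2 * t) = E⁻¹ := by
    rw [hE_def, ← Real.exp_neg]; ring_nf
  have hE4 : Real.exp (4 * t) = E ^ 2 := by
    rw [hE_def, ← Real.exp_nat_mul]; norm_num; ring_nf
  have hEm4 : Real.exp (-4 * t) = (E ^ 2)⁻¹ := by
    rw [← hE4, ← Real.exp_neg]; ring_nf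
  have hFr : F r = (E ^ 2)⁻¹ + c₁ / r + c₂ / r ^ 2 + c₃ / r ^ 3 + c₄ / r ^ 4 := by
    simp only [F, hEm4]
  clear hFr hF' hF'' hG
  simp only [F, c₁, c₂, c₃, c₄] at hF ⊢
  rw [hEm2, hE4, hEm4] at hF ⊢
  rw [← hs_def] at hF ⊢
  exact key_identity s q α E r hE0 hr0 hs hF
end

section
/- Let t, q ∈ ℝ, r₀ > 0, and let α be a real number with α ≥ q² + 6e^{−4t}r₀². Define F_α(r) = e^{−4t} + e^{−2t}√((8/3)(α + q²/2))/r + α/r² + (e^{2t}/6)√((8/3)(α + q²/2))(α − q²)/r³ + e^{4t}(α − q²)²/(36 r⁴). Then for all r > 0, F_α(r) ≥ (e^{−2t} + √(4e^{−4t}r₀² + q²)/r + e^{−2t}r₀²/r²)². -/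
/-- Coefficient-by-coefficient comparison: if `α ≥ q² + 6e^{−4t}r₀²`, then the
radial expansion `F_α(r)` dominates the fourth power of the Reissner–Nordström
conformal factor for all `r > 0`. -/
theorem expansion_ge_RN_of_alpha_ge (t q r₀ α : ℝ) (hr₀ : 0 < r₀)
    (hα : q ^ 2 + 6 * Real.exp (-4 * t) * r₀ ^ 2 ≤ α) :
    ∀ r : ℝ, 0 < r →
      (Real.exp (-2 * t) + Real.sqrt (4 * Real.exp (-4 * t) * r₀ ^ 2 + q ^ 2) / r
          + Real.exp (-2 * t) * r₀ ^ 2 / r ^ 2) ^ 2 ≤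
        Real.exp (-4 * t)
          + Real.exp (-2 * t) * Real.sqrt ((8 / 3) * (α + q ^ 2 / 2)) / r
          + α / r ^ 2
          + (Real.exp (2 * t) / 6) * Real.sqrt ((8 / 3) * (α + q ^ 2 / 2)) * (α - q ^ 2) / r ^ 3
          + Real.exp (4 * t) * (α - q ^ 2) ^ 2 / (36 * r ^ 4) := by
  intro r hr
  have hE4 : (0:ℝ) < Real.exp (-4 * t) := Real.exp_pos _
  have hE2 : (0:ℝ) < Real.exp (-2 * t) := Real.exp_pos _
  set a : ℝ := Real.exp (-2 * t) with ha
  set c : ℝ := a * r₀ ^ 2 with hc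
  set B : ℝ := 4 * Real.exp (-4 * t) * r₀ ^ 2 + q ^ 2 with hBdef
  set A : ℝ := (8 / 3) * (α + q ^ 2 / 2) with hAdef
  have hB0 : (0:ℝ) ≤ B := by positivity
  set b : ℝ := Real.sqrt B with hb
  have hb0 : 0 ≤ b := Real.sqrt_nonneg _
  have hbsq : b ^ 2 = B := Real.sq_sqrt hB0
  have hAB : 4 * B ≤ A := by simp only [hAdef, hBdef]; linarith
  have hA0 : (0:ℝ) ≤ A := by linarith [hB0]
  set s : ℝ := Real.sqrt A with hs
  have hs0 : 0 ≤ s := Real.sqrt_nonneg _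
  have h2b : 2 * b ≤ s := by
    have h4B : Real.sqrt (4 * B) = 2 * b := by
      rw [show (4:ℝ) * B = (2 * b) ^ 2 by rw [mul_pow, hbsq]; norm_num,
        Real.sqrt_sq (by positivity)]
    rw [← h4B]
    exact Real.sqrt_le_sqrt hAB
  have haa : a * a = Real.exp (-4 * t) := by
    rw [ha, ← Real.exp_add]; ring_nf
  have hαq : 6 * Real.exp (-4 * t) * r₀ ^ 2 ≤ α - q ^ 2 := by linarith
  have he2 : Real.exp (2 * t) * Real.exp (-4 * t) = a := by
    rw [ha, ← Real.exp_add]; ring_nf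
  have he4 : Real.exp (4 * t) * (Real.exp (-4 * t) * Real.exp (-4 * t)) = Real.exp (-4 * t) := by
    rw [← Real.exp_add, ← Real.exp_add]; ring_nf
  clear_value a c B A b s
  -- expand the square
  have expand : (a + b / r + c / r ^ 2) ^ 2
      = a * a + 2 * a * b / r + (B + 2 * a * c) / r ^ 2 + 2 * b * c / r ^ 3
        + (c * c) / (36 * r ^ 4) * 36 := by
    field_simp
    rw [← hbsq]
    ring
  rw [expand, haa]
  have hr2 : (0:ℝ) < r ^ 2 := by positivity
  have hr3 : (0:ℝ) < r ^ 3 := by positivity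
  have hr4 : (0:ℝ) < 36 * r ^ 4 := by positivity
  have c1 : 2 * a * b / r ≤ a * s / r :=
    div_le_div_of_nonneg_right
      (by nlinarith [mul_le_mul_of_nonneg_left h2b hE2.le]) hr.le
  have c2 : (B + 2 * a * c) / r ^ 2 ≤ α / r ^ 2 := by
    apply div_le_div_of_nonneg_right _ hr2.le
    have : 2 * a * c = 2 * Real.exp (-4 * t) * r₀ ^ 2 := by rw [hc]; linear_combination (2 * r₀ ^ 2) * haa
    rw [this, hBdef]; linarith
  have c3 : 2 * b * c / r ^ 3 ≤ Real.exp (2 * t) / 6 * s * (α - q ^ 2) / r ^ 3 := by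
    apply div_le_div_of_nonneg_right _ hr3.le
    have key : (2 * b) * (6 * Real.exp (-4 * t) * r₀ ^ 2) ≤ s * (α - q ^ 2) :=
      mul_le_mul h2b hαq (by positivity) hs0
    have he2pos : (0:ℝ) < Real.exp (2 * t) := Real.exp_pos _
    calc 2 * b * c
        = Real.exp (2 * t) / 6 * ((2 * b) * (6 * Real.exp (-4 * t) * r₀ ^ 2)) := by
          linear_combination 2 * b * hc - 2 * b * r₀ ^ 2 * he2
      _ ≤ Real.exp (2 * t) / 6 * (s * (α - q ^ 2)) :=
          mul_le_mul_of_nonneg_left key (by positivity)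
      _ = Real.exp (2 * t) / 6 * s * (α - q ^ 2) := by ring
  have c4 : c * c / (36 * r ^ 4) * 36 ≤ Real.exp (4 * t) * (α - q ^ 2) ^ 2 / (36 * r ^ 4) := by
    rw [div_mul_eq_mul_div]
    apply div_le_div_of_nonneg_right _ hr4.le
    have hsq : (6 * Real.exp (-4 * t) * r₀ ^ 2) ^ 2 ≤ (α - q ^ 2) ^ 2 := by
      apply pow_le_pow_left₀ (by positivity) hαq
    have he4pos : (0:ℝ) < Real.exp (4 * t) := Real.exp_pos _
    have hcc : c * c = Real.exp (-4 * t) * r₀ ^ 4 := by rw [hc]; linear_combination (r₀ ^ 4) * haa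
    calc c * c * 36
        = Real.exp (4 * t) * (6 * Real.exp (-4 * t) * r₀ ^ 2) ^ 2 := by
          linear_combination 36 * hcc - 36 * r₀ ^ 4 * he4
      _ ≤ Real.exp (4 * t) * (α - q ^ 2) ^ 2 :=
          mul_le_mul_of_nonneg_left hsq he4pos.le
  linarith [c1, c2, c3, c4]
end

section
/- Let A₀ > 0 and q ∈ ℝ satisfy A₀ > 4πq². Then there exists ε₀ > 0 such that for every ε ∈ (0, ε₀) and every α ≥ q²: if A₀/(4π) ≤ ε²A₀ + ε√A₀·√((8/3)(α + q²/2)) + α + ((α − q²)/(6ε√A₀))·√((8/3)(α + q²/2)) + (α − q²)²/(36 ε² A₀), then α − q² ≥ 6 ε² A₀. -/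
private lemma aux_alpha_bound (s Q B d ε q2 α P δ : ℝ)
    (hs : 0 < s) (hQ : 0 ≤ Q) (hBnn : 0 ≤ B)
    (hB2 : B ^ 2 = (8 / 3) * (α + q2 / 2)) (hQ2 : Q ^ 2 = q2)
    (hd : d = α - q2) (hd0 : 0 ≤ d) (hdlt : d < 6 * ε ^ 2 * s ^ 2)
    (hε : 0 < ε) (hε1 : ε < 1)
    (hε2' : ε * (16 * s ^ 2 + 4 * s * Q + 1) < δ)
    (hineq : P ≤ ε ^ 2 * s ^ 2 + ε * s * B + α + d / (6 * ε * s) * B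
        + d ^ 2 / (36 * ε ^ 2 * s ^ 2))
    (hP : P = q2 + δ) : False := by
  have hεs : 0 < ε * s := mul_pos hε hs
  have hBsq : B ^ 2 ≤ (2 * Q + 4 * ε * s) ^ 2 := by
    nlinarith [mul_nonneg (mul_nonneg hQ hε.le) hs.le]
  have hX : 0 < 2 * Q + 4 * ε * s := by positivity
  have hBle : B ≤ 2 * Q + 4 * ε * s := by nlinarith
  have h4 : d / (6 * ε * s) * B ≤ ε * s * B := by
    apply mul_le_mul_of_nonneg_right _ hBnn
    rw [div_le_iff₀ (by positivity)]
    nlinarith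
  have h5 : d ^ 2 / (36 * ε ^ 2 * s ^ 2) ≤ ε ^ 2 * s ^ 2 := by
    rw [div_le_iff₀ (by positivity)]
    nlinarith
  have h3 : ε * s * B ≤ ε * s * (2 * Q + 4 * ε * s) :=
    mul_le_mul_of_nonneg_left hBle (by positivity)
  nlinarith [mul_nonneg (mul_nonneg hε.le hs.le) hQ,
    mul_nonneg (mul_nonneg hε.le (sq_nonneg s)) (sub_nonneg.2 hε1.le)]

/-- The key quantitative step of the comparison lemma: if `A₀ > 4πq²`, then for
all sufficiently small `ε > 0` and every `α ≥ q²`, the surface-average inequality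
for `A₀/(4π)` forces `α − q² ≥ 6ε²A₀`. -/
theorem area_charge_forces_alpha_bound (A₀ q : ℝ) (hA₀ : 0 < A₀)
    (hAq : 4 * Real.pi * q ^ 2 < A₀) :
    ∃ ε₀ > 0, ∀ ε : ℝ, 0 < ε → ε < ε₀ → ∀ α : ℝ, q ^ 2 ≤ α →
      A₀ / (4 * Real.pi) ≤
          ε ^ 2 * A₀ + ε * Real.sqrt A₀ * Real.sqrt ((8 / 3) * (α + q ^ 2 / 2)) + α
            + ((α - q ^ 2) / (6 * ε * Real.sqrt A₀)) * Real.sqrt ((8 / 3) * (α + q ^ 2 / 2))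
            + (α - q ^ 2) ^ 2 / (36 * ε ^ 2 * A₀) →
        6 * ε ^ 2 * A₀ ≤ α - q ^ 2 := by
  have hπ := Real.pi_pos
  obtain ⟨s, hs_def⟩ : ∃ x, Real.sqrt A₀ = x := ⟨_, rfl⟩
  have hs : 0 < s := hs_def ▸ Real.sqrt_pos.mpr hA₀
  have hs2 : s ^ 2 = A₀ := by rw [← hs_def]; exact Real.sq_sqrt hA₀.le
  obtain ⟨δ, hδ_def⟩ : ∃ x, A₀ / (4 * Real.pi) - q ^ 2 = x := ⟨_, rfl⟩
  have hδ : 0 < δ := by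
    rw [← hδ_def]
    have : q ^ 2 < A₀ / (4 * Real.pi) := by
      rw [lt_div_iff₀ (by positivity)]; nlinarith
    linarith
  obtain ⟨Q, hQ_def⟩ : ∃ x, |q| = x := ⟨_, rfl⟩
  have hQ : 0 ≤ Q := hQ_def ▸ abs_nonneg q
  have hQ2 : Q ^ 2 = q ^ 2 := by rw [← hQ_def]; exact sq_abs q
  refine ⟨min 1 (δ / (16 * s ^ 2 + 4 * s * Q + 1)), by positivity, ?_⟩
  intro ε hε hεlt α hα hineq
  by_contra hcon
  push_neg at hcon
  have hε1 : ε < 1 := lt_of_lt_of_le hεlt (min_le_left _ _)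
  have hε2 : ε < δ / (16 * s ^ 2 + 4 * s * Q + 1) := lt_of_lt_of_le hεlt (min_le_right _ _)
  have hε2' : ε * (16 * s ^ 2 + 4 * s * Q + 1) < δ := by
    rw [lt_div_iff₀ (by positivity)] at hε2
    linarith
  obtain ⟨B, hB_def⟩ : ∃ x, Real.sqrt ((8 / 3) * (α + q ^ 2 / 2)) = x := ⟨_, rfl⟩
  have hBnn : 0 ≤ B := hB_def ▸ Real.sqrt_nonneg _
  have hB2 : B ^ 2 = (8 / 3) * (α + q ^ 2 / 2) := by
    rw [← hB_def]; exact Real.sq_sqrt (by nlinarith [sq_nonneg q])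
  rw [hs_def, hB_def, ← hs2] at hineq
  have hP : s ^ 2 / (4 * Real.pi) = q ^ 2 + δ := by
    rw [hs2, ← hδ_def]; ring
  rw [hP] at hineq
  exact aux_alpha_bound s Q B (α - q ^ 2) ε (q ^ 2) α (q ^ 2 + δ) δ
    hs hQ hBnn hB2 hQ2 rfl (by linarith) (by nlinarith) hε hε1 hε2' hineq rfl
end

section
/- Let m, q ∈ ℝ with m ≥ |q|, let t ∈ ℝ, and define P(r) := e^{−2t} + m/r + e^{2t}(m² − q²)/(4r²) and v(r) := (−e^{−2t} + e^{2t}(m² − q²)/(4r²)) / P(r) for r > 0. Then v is twice differentiable on (0, ∞) and for all r > 0: v''(r) + (2/r)·v'(r) + (P'(r)/P(r))·v'(r) = q²·v(r) / (r⁴·P(r)²). -/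
lemma hd_base (cst : ℝ) (n : ℕ) {s : ℝ} (hs : s ≠ 0) :
    HasDerivAt (fun x : ℝ => cst / x ^ (n+1)) (-((n:ℝ)+1) * cst / s ^ (n+2)) s := by
  have h := (hasDerivAt_const s cst).div (hasDerivAt_pow (n+1) s) (pow_ne_zero _ hs)
  refine h.congr_deriv ?_
  simp only [Nat.add_sub_cancel, Nat.cast_add, Nat.cast_one]
  field_simp
  ring

lemma hd_basek (cst k : ℝ) (n : ℕ) {s : ℝ} (hs : s ≠ 0) (hk : k ≠ 0) :
    HasDerivAt (fun x : ℝ => cst / (k * x ^ (n+1))) (-((n:ℝ)+1) * cst / (k * s ^ (n+2))) s := by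
  have h := (hasDerivAt_const s cst).div ((hasDerivAt_pow (n+1) s).const_mul k)
      (mul_ne_zero hk (pow_ne_zero _ hs))
  refine h.congr_deriv ?_
  simp only [Nat.add_sub_cancel, Nat.cast_add, Nat.cast_one]
  field_simp
  ring


lemma expand_aux (r X Y PD PP : ℝ) (hr : r ≠ 0) (hPP : PP ≠ 0) :
    (Y * PP ^ 2 - X * (2 * PP ^ 1 * PD)) / (PP ^ 2) ^ 2 + 2 / r * (X / PP ^ 2) +
      PD / PP * (X / PP ^ 2) = (Y * PP + 2 / r * X * PP - X * PD) / PP ^ 3 := by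
  field_simp
  ring

lemma hd1 (cst : ℝ) {s : ℝ} (hs : s ≠ 0) :
    HasDerivAt (fun x : ℝ => cst / x) (-cst / s ^ 2) s := by
  have h := (hasDerivAt_const s cst).div (hasDerivAt_id' (x := s)) hs
  refine h.congr_deriv ?_
  field_simp
  ring

set_option maxHeartbeats 1000000 in
/-- The radial form of the equation satisfied by the Reissner–Nordström flow
velocity: `v'' + (2/r)v' + (P'/P)v' = q²v/(r⁴P²)` on `(0, ∞)`. -/
theorem RN_velocity_radial_equation (m q t : ℝ) (hq : |q| ≤ m) :
    let P : ℝ → ℝ := fun r =>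
      Real.exp (-2 * t) + m / r + Real.exp (2 * t) * (m ^ 2 - q ^ 2) / (4 * r ^ 2)
    let v : ℝ → ℝ := fun r =>
      (-Real.exp (-2 * t) + Real.exp (2 * t) * (m ^ 2 - q ^ 2) / (4 * r ^ 2)) / P r
    ∀ r : ℝ, 0 < r →
      DifferentiableAt ℝ v r ∧ DifferentiableAt ℝ (deriv v) r ∧
        deriv (deriv v) r + (2 / r) * deriv v r + (deriv P r / P r) * deriv v r =
          q ^ 2 * v r / (r ^ 4 * (P r) ^ 2) := by
  intro P v r hr
  have hr0 : r ≠ 0 := ne_of_gt hr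
  have hm0 : 0 ≤ m := (abs_nonneg q).trans hq
  have hmq : 0 ≤ m ^ 2 - q ^ 2 := by nlinarith [sq_abs q, abs_nonneg q]
  set C : ℝ := Real.exp (2 * t) * (m ^ 2 - q ^ 2) with hC
  have hPpos : ∀ s : ℝ, 0 < s → 0 < P s := by
    intro s hs
    have h0 : 0 < Real.exp (-2 * t) := Real.exp_pos _
    have h1 : 0 ≤ m / s := div_nonneg hm0 hs.le
    have h2 : 0 ≤ Real.exp (2 * t) * (m ^ 2 - q ^ 2) / (4 * s ^ 2) :=
      div_nonneg (mul_nonneg (Real.exp_pos _).le hmq) (by positivity)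
    have hdef : P s = Real.exp (-2 * t) + m / s + Real.exp (2 * t) * (m ^ 2 - q ^ 2) / (4 * s ^ 2) := rfl
    rw [hdef]; linarith
  set N : ℝ → ℝ := fun s => -Real.exp (-2 * t) + C / (4 * s ^ 2) with hN
  set Nd : ℝ → ℝ := fun s => -C / (2 * s ^ 3) with hNd
  set Pd : ℝ → ℝ := fun s => -m / s ^ 2 + -C / (2 * s ^ 3) with hPd
  set G : ℝ → ℝ := fun s => Nd s * P s - N s * Pd s with hG
  set w : ℝ → ℝ := fun s => G s / P s ^ 2 with hw
  have hNder : ∀ s : ℝ, s ≠ 0 → HasDerivAt N (Nd s) s := by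
    intro s hs
    have h := (hasDerivAt_const s (-Real.exp (-2 * t))).add (hd_basek C 4 1 hs (by norm_num))
    refine h.congr_deriv ?_
    simp only [hNd]
    push_cast
    ring
  have hPder : ∀ s : ℝ, s ≠ 0 → HasDerivAt P (Pd s) s := by
    intro s hs
    have h := ((hasDerivAt_const s (Real.exp (-2 * t))).add (hd1 m hs)).add
      (hd_basek C 4 1 hs (by norm_num))
    refine h.congr_deriv ?_
    simp only [hPd]
    push_cast
    ring
  have hNdder : ∀ s : ℝ, s ≠ 0 → HasDerivAt Nd (3 * C / (2 * s ^ 4)) s := by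
    intro s hs
    have h := hd_basek (-C) 2 2 hs (by norm_num)
    refine h.congr_deriv ?_
    push_cast
    ring
  have hPdder : ∀ s : ℝ, s ≠ 0 →
      HasDerivAt Pd (2 * m / s ^ 3 + 3 * C / (2 * s ^ 4)) s := by
    intro s hs
    have h := (hd_base (-m) 1 hs).add (hd_basek (-C) 2 2 hs (by norm_num))
    refine h.congr_deriv ?_
    push_cast
    ring
  have hGder : ∀ s : ℝ, s ≠ 0 → HasDerivAt G
      ((3 * C / (2 * s ^ 4)) * P s + Nd s * Pd s -
        (Nd s * Pd s + N s * (2 * m / s ^ 3 + 3 * C / (2 * s ^ 4)))) s := by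
    intro s hs
    exact ((hNdder s hs).mul (hPder s hs)).sub ((hNder s hs).mul (hPdder s hs))
  have hvder : ∀ s : ℝ, 0 < s → HasDerivAt v (w s) s := by
    intro s hs
    exact (hNder s hs.ne').div (hPder s hs.ne') (hPpos s hs).ne'
  have hwr : HasDerivAt w
      ((((3 * C / (2 * r ^ 4)) * P r + Nd r * Pd r -
          (Nd r * Pd r + N r * (2 * m / r ^ 3 + 3 * C / (2 * r ^ 4)))) * P r ^ 2 -
        G r * (2 * P r ^ 1 * Pd r)) / (P r ^ 2) ^ 2) r := by
    have h := (hGder r hr0).div ((hPder r hr0).pow 2) (pow_ne_zero 2 (hPpos r hr).ne')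
    refine h.congr_deriv ?_
    norm_num
  have hev : deriv v =ᶠ[nhds r] w := by
    filter_upwards [isOpen_Ioi.mem_nhds (show r ∈ Set.Ioi 0 from hr)] with s hs
    exact (hvder s hs).deriv
  refine ⟨(hvder r hr).differentiableAt, hwr.differentiableAt.congr_of_eventuallyEq hev, ?_⟩
  rw [hev.deriv_eq, hwr.deriv, (hvder r hr).deriv, (hPder r hr0).deriv]
  have hvr : v r = N r / P r := rfl
  have hPrd : P r = Real.exp (-2 * t) + m / r + C / (4 * r ^ 2) := rfl
  have hPne : P r ≠ 0 := (hPpos r hr).ne'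
  have hAC : Real.exp (-2 * t) * C = m ^ 2 - q ^ 2 := by
    rw [hC, ← mul_assoc, ← Real.exp_add, show (-2 * t + 2 * t : ℝ) = 0 by ring,
      Real.exp_zero, one_mul]
  have hq2 : q ^ 2 = m ^ 2 - Real.exp (-2 * t) * C := by linarith
  have hnum : Nd r * P r - N r * Pd r =
      -(4 * Real.exp (-2 * t) * m * r ^ 2 + 4 * Real.exp (-2 * t) * C * r + C * m) /
        (4 * r ^ 4) := by
    simp only [hN, hNd, hPd, hPrd]
    field_simp
    ring
  have hGdval : 3 * C / (2 * r ^ 4) * P r + Nd r * Pd r -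
      (Nd r * Pd r + N r * (2 * m / r ^ 3 + 3 * C / (2 * r ^ 4))) =
      (2 * Real.exp (-2 * t) * m * r ^ 2 + 3 * Real.exp (-2 * t) * C * r + C * m) / r ^ 5 := by
    simp only [hN, hNd, hPd, hPrd]
    field_simp
    ring
  have key : (2 * Real.exp (-2 * t) * m * r ^ 2 + 3 * Real.exp (-2 * t) * C * r + C * m) / r ^ 5
        * P r +
      2 / r * (-(4 * Real.exp (-2 * t) * m * r ^ 2 + 4 * Real.exp (-2 * t) * C * r + C * m) /
        (4 * r ^ 4)) * P r -
      -(4 * Real.exp (-2 * t) * m * r ^ 2 + 4 * Real.exp (-2 * t) * C * r + C * m) /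
        (4 * r ^ 4) * Pd r = q ^ 2 * N r / r ^ 4 := by
    simp only [hN, hPd, hPrd]
    rw [hq2]
    field_simp
    ring
  simp only [hw, hG]
  rw [hGdval, hnum, hvr,
    expand_aux r _ _ (Pd r) (P r) hr0 hPne, key]
  field_simp
end

section
/- Let m, q ∈ ℝ with m ≥ |q| and t ∈ ℝ. Define W(r) := √(e^{−2t} + m/r + e^{2t}(m² − q²)/(4r²)) for r > 0. Then W is twice differentiable on (0, ∞) and for all r > 0: W''(r) + (2/r)·W'(r) = −q² / (4 r⁴ W(r)³). -/
/-- The Reissner–Nordström conformal factor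
`W(r) = √(e^{−2t} + m/r + e^{2t}(m² − q²)/(4r²))` satisfies the radial
semilinear equation `W'' + (2/r)W' = −q²/(4r⁴W³)` on `(0, ∞)`. -/
theorem RN_conformal_factor_radial_equation (m q t : ℝ) (hq : |q| ≤ m) :
    let W : ℝ → ℝ := fun r =>
      Real.sqrt (Real.exp (-2 * t) + m / r + Real.exp (2 * t) * (m ^ 2 - q ^ 2) / (4 * r ^ 2))
    ∀ r : ℝ, 0 < r →
      DifferentiableAt ℝ W r ∧ DifferentiableAt ℝ (deriv W) r ∧
        deriv (deriv W) r + (2 / r) * deriv W r = -q ^ 2 / (4 * r ^ 4 * (W r) ^ 3) := by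
  intro W r hr
  have hr0 : r ≠ 0 := hr.ne'
  have hm : (0:ℝ) ≤ m := (abs_nonneg q).trans hq
  have hq2 : q ^ 2 ≤ m ^ 2 := by nlinarith [sq_abs q, abs_nonneg q]
  have hApos := Real.exp_pos (-2*t)
  have hBpos := Real.exp_pos (2*t)
  have hAB : Real.exp (-2*t) * Real.exp (2*t) = 1 := by
    rw [← Real.exp_add]; norm_num
  set F : ℝ → ℝ := fun x => Real.exp (-2*t) + m / x + Real.exp (2*t) * (m ^ 2 - q ^ 2) / (4 * x ^ 2) with hFdef
  set F' : ℝ → ℝ := fun x => -m / x^2 - Real.exp (2*t) * (m ^ 2 - q ^ 2) / (2 * x ^ 3) with hF'def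
  have hW : W = fun x => Real.sqrt (F x) := rfl
  have hFpos : ∀ x : ℝ, 0 < x → 0 < F x := by
    intro x hx
    have h1 : 0 ≤ m / x := div_nonneg hm hx.le
    have h2 : 0 ≤ Real.exp (2*t) * (m ^ 2 - q ^ 2) / (4 * x ^ 2) :=
      div_nonneg (mul_nonneg hBpos.le (by linarith)) (by positivity)
    simp only [hFdef]; linarith
  have hFd : ∀ x : ℝ, 0 < x → HasDerivAt F (F' x) x := by
    intro x hx
    have h1 : HasDerivAt (fun y : ℝ => m / y) ((0 * x - m * 1) / x ^ 2) x :=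
      (hasDerivAt_const x m).div (hasDerivAt_id x) hx.ne'
    have h2 : HasDerivAt (fun y : ℝ => Real.exp (2*t) * (m^2 - q^2) / (4 * y ^ 2))
        ((0 * (4 * x ^ 2) - Real.exp (2*t) * (m^2-q^2) * (4 * ((2:ℕ) * x ^ 1))) / (4 * x ^ 2) ^ 2) x :=
      (hasDerivAt_const x _).div ((hasDerivAt_pow 2 x).const_mul 4) (by positivity)
    have h := ((hasDerivAt_const x (Real.exp (-2*t))).add h1).add h2
    refine h.congr_deriv ?_
    simp only [hF'def]
    field_simp
    ring
  have hWd : ∀ x : ℝ, 0 < x → HasDerivAt W (F' x / (2 * Real.sqrt (F x))) x := by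
    intro x hx
    rw [hW]
    exact (hFd x hx).sqrt (hFpos x hx).ne'
  set G : ℝ → ℝ := fun x => F' x / (2 * Real.sqrt (F x)) with hGdef
  have hEq : deriv W =ᶠ[nhds r] G :=
    Filter.eventuallyEq_of_mem (isOpen_Ioi.mem_nhds hr) (fun x hx => (hWd x hx).deriv)
  -- derivative of F'
  have hF'd : HasDerivAt F' (2*m/r^3 + 3 * Real.exp (2*t)*(m^2-q^2)/(2*r^4)) r := by
    have h1 : HasDerivAt (fun y : ℝ => -m / y ^ 2)
        ((0 * r ^ 2 - -m * ((2:ℕ) * r ^ 1)) / (r ^ 2) ^ 2) r :=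
      (hasDerivAt_const r (-m)).div (hasDerivAt_pow 2 r) (by positivity)
    have h2 : HasDerivAt (fun y : ℝ => Real.exp (2*t) * (m^2 - q^2) / (2 * y ^ 3))
        ((0 * (2 * r ^ 3) - Real.exp (2*t) * (m^2-q^2) * (2 * ((3:ℕ) * r ^ 2))) / (2 * r ^ 3) ^ 2) r :=
      (hasDerivAt_const r _).div ((hasDerivAt_pow 3 r).const_mul 2) (by positivity)
    have h := h1.sub h2
    refine h.congr_deriv ?_
    field_simp
    ring
  set s := Real.sqrt (F r) with hsdef
  have hs : 0 < s := Real.sqrt_pos.mpr (hFpos r hr)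
  have hs2 : s ^ 2 = F r := Real.sq_sqrt (hFpos r hr).le
  have hden : HasDerivAt (fun y => 2 * Real.sqrt (F y)) (2 * (F' r / (2 * s))) r :=
    ((hFd r hr).sqrt (hFpos r hr).ne').const_mul 2
  have hGd : HasDerivAt G
      (((2*m/r^3 + 3 * Real.exp (2*t)*(m^2-q^2)/(2*r^4)) * (2 * s) - F' r * (2 * (F' r / (2 * s)))) / (2 * s) ^ 2) r :=
    hF'd.div hden (by positivity)
  have hdW : HasDerivAt (deriv W) (((2*m/r^3 + 3 * Real.exp (2*t)*(m^2-q^2)/(2*r^4)) * (2 * s) - F' r * (2 * (F' r / (2 * s)))) / (2 * s) ^ 2) r :=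
    hGd.congr_of_eventuallyEq hEq
  refine ⟨(hWd r hr).differentiableAt, hdW.differentiableAt, ?_⟩
  rw [hdW.deriv, (hWd r hr).deriv]
  have hWr : W r = s := rfl
  rw [hWr]
  -- key algebraic identity
  have hF'r : F' r = -m / r^2 - Real.exp (2*t) * (m ^ 2 - q ^ 2) / (2 * r ^ 3) := rfl
  have hFr : s ^ 2 = Real.exp (-2*t) + m / r + Real.exp (2*t) * (m ^ 2 - q ^ 2) / (4 * r ^ 2) := hs2
  rw [show F' r / (2 * Real.sqrt (F r)) = F' r / (2 * s) from rfl, hF'r]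
  clear_value s
  clear hdW hGd hden hEq hWd hFd hFpos hF'd hW hWr hF'r hs2 hsdef
  have hFr2 : 4*r^2*s^2 = 4*r^2*Real.exp (-2*t) + 4*r*m + Real.exp (2*t)*(m^2-q^2) := by
    rw [hFr]; field_simp
  field_simp
  linear_combination (4 * Real.exp (2*t) * (m^2-q^2)) * hFr2 + (16 * r^2 * (m^2-q^2)) * hAB
end

section
/- Let m, q ∈ ℝ with m > |q| and t ∈ ℝ. Define P(r) := e^{−2t} + m/r + e^{2t}(m² − q²)/(4r²), U(r) := √P(r), and V(r) := (−e^{−2t} + e^{2t}(m² − q²)/(4r²)) / U(r) for r > 0. Then: (i) V is twice differentiable on (0, ∞) and V''(r) + (2/r)·V'(r) = (3 q² / (4 r⁴ P(r)²))·V(r) for all r > 0; (ii) V(r₀) = 0 at r₀ := (√(m² − q²)/2)e^{2t}; and (iii) V(r) → −e^{−t} as r → ∞. -/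
open Filter


private lemma RN_alg (Pv pn pp KK KK' q2 r s : ℝ) (hs : s ≠ 0) (hr : r ≠ 0)
    (hs2 : s ^ 2 = Pv)
    (hI : 2 * KK' * (s ^ 2) + KK * pp + 4 / r * (KK * (s ^ 2)) =
      3 * q2 * pn / (2 * r ^ 4 * Pv ^ 2)) :
    KK' * s + KK * (pp / (2 * s)) + 2 / r * (KK * s) =
      3 * q2 / (4 * r ^ 4 * Pv ^ 2) * (pn / s) := by
  subst hs2
  have h2 : KK' * s + KK * (pp / (2 * s)) + 2 / r * (KK * s)
      = (2 * KK' * (s ^ 2) + KK * pp + 4 / r * (KK * (s ^ 2))) / (2 * s) := by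
    field_simp; ring
  rw [h2, hI]
  ring

set_option maxHeartbeats 1600000 in
private lemma RN_aux (A b C q2 : ℝ) (hA : 0 < A) (hb : 0 < b) (hC : 0 < C)
    (hq : q2 = b ^ 2 - A * C) (r : ℝ) (hr : 0 < r) :
    DifferentiableAt ℝ (fun x : ℝ => (-A + C / (4 * x ^ 2)) / Real.sqrt (A + b / x + C / (4 * x ^ 2))) r ∧
      DifferentiableAt ℝ (deriv (fun x : ℝ => (-A + C / (4 * x ^ 2)) / Real.sqrt (A + b / x + C / (4 * x ^ 2)))) r ∧
        deriv (deriv (fun x : ℝ => (-A + C / (4 * x ^ 2)) / Real.sqrt (A + b / x + C / (4 * x ^ 2)))) r + 2 / r * deriv (fun x : ℝ => (-A + C / (4 * x ^ 2)) / Real.sqrt (A + b / x + C / (4 * x ^ 2))) r =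
          3 * q2 / (4 * r ^ 4 * (A + b / r + C / (4 * r ^ 2)) ^ 2) * ((-A + C / (4 * r ^ 2)) / Real.sqrt (A + b / r + C / (4 * r ^ 2))) := by
  have hPpos : ∀ x : ℝ, 0 < x → 0 < A + b / x + C / (4 * x ^ 2) := by
    intro x hx
    have h1 : 0 < b / x := div_pos hb hx
    have h2 : 0 < C / (4 * x ^ 2) := div_pos hC (by positivity)
    linarith
  have hC2 : ∀ x : ℝ, 0 < x → HasDerivAt (fun y : ℝ => C / (4 * y ^ 2)) (-C / (2 * x ^ 3)) x := by
    intro x hx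
    have hd : HasDerivAt (fun y : ℝ => 4 * y ^ 2) (4 * (2 * x)) x := by
      have h := (hasDerivAt_pow 2 x).const_mul (4:ℝ)
      convert h using 1 <;> (try rfl) <;> (try ext y) <;> (try push_cast) <;> (try field_simp [hx.ne']) <;> (try ring) <;> (try ring_nf)
    have h := (hasDerivAt_const x C).div hd (by positivity)
    convert h using 1 <;> (try rfl) <;> (try ext y) <;> (try push_cast) <;> (try field_simp [hx.ne']) <;> (try ring) <;> (try ring_nf)
  have hPd : ∀ x : ℝ, 0 < x → HasDerivAt (fun y : ℝ => A + b / y + C / (4 * y ^ 2)) (-b / x ^ 2 - C / (2 * x ^ 3)) x := by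
    intro x hx
    have h1 : HasDerivAt (fun y : ℝ => b / y) (-b / x ^ 2) x := by
      have h := (hasDerivAt_const x b).div (hasDerivAt_id x) hx.ne'
      convert h using 1 <;> (try rfl) <;> (try ext y) <;> (try push_cast) <;> (try field_simp [hx.ne']) <;> (try ring) <;> (try ring_nf) <;> simp [id]
    have h := ((hasDerivAt_const x A).add h1).add (hC2 x hx)
    convert h using 1 <;> (try rfl) <;> (try ext y) <;> (try push_cast) <;> (try field_simp [hx.ne']) <;> (try ring) <;> (try ring_nf)
  have hNd : ∀ x : ℝ, 0 < x → HasDerivAt (fun y : ℝ => -A + C / (4 * y ^ 2)) (-C / (2 * x ^ 3)) x := by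
    intro x hx
    have h := (hasDerivAt_const x (-A)).add (hC2 x hx)
    convert h using 1 <;> (try rfl) <;> (try ext y) <;> (try push_cast) <;> (try field_simp [hx.ne']) <;> (try ring) <;> (try ring_nf)
  have hNpd : ∀ x : ℝ, 0 < x → HasDerivAt (fun y : ℝ => -C / (2 * y ^ 3)) (3 * C / (2 * x ^ 4)) x := by
    intro x hx
    have hd : HasDerivAt (fun y : ℝ => 2 * y ^ 3) (2 * (3 * x ^ 2)) x := by
      have h := (hasDerivAt_pow 3 x).const_mul (2:ℝ)
      convert h using 1 <;> (try rfl) <;> (try ext y) <;> (try push_cast) <;> (try field_simp [hx.ne']) <;> (try ring) <;> (try ring_nf)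
    have h := (hasDerivAt_const x (-C)).div hd (by positivity)
    convert h using 1 <;> (try rfl) <;> (try ext y) <;> (try push_cast) <;> (try field_simp [hx.ne']) <;> (try ring) <;> (try ring_nf)
  have hPpd : ∀ x : ℝ, 0 < x → HasDerivAt (fun y : ℝ => -b / y ^ 2 - C / (2 * y ^ 3)) (2 * b / x ^ 3 + 3 * C / (2 * x ^ 4)) x := by
    intro x hx
    have h1 : HasDerivAt (fun y : ℝ => -b / y ^ 2) (2 * b / x ^ 3) x := by
      have h := (hasDerivAt_const x (-b)).div (hasDerivAt_pow 2 x) (pow_ne_zero 2 hx.ne')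
      convert h using 1 <;> (try rfl) <;> (try ext y) <;> (try push_cast) <;> (try field_simp [hx.ne']) <;> (try ring) <;> (try ring_nf)
    have h2 : HasDerivAt (fun y : ℝ => C / (2 * y ^ 3)) (-(3 * C / (2 * x ^ 4))) x := by
      have hd : HasDerivAt (fun y : ℝ => 2 * y ^ 3) (2 * (3 * x ^ 2)) x := by
        have h := (hasDerivAt_pow 3 x).const_mul (2:ℝ)
        convert h using 1 <;> (try rfl) <;> (try ext y) <;> (try push_cast) <;> (try field_simp [hx.ne']) <;> (try ring) <;> (try ring_nf)
      have h := (hasDerivAt_const x C).div hd (by positivity)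
      convert h using 1 <;> (try rfl) <;> (try ext y) <;> (try push_cast) <;> (try field_simp [hx.ne']) <;> (try ring) <;> (try ring_nf)
    have h := h1.sub h2
    convert h using 1 <;> (try rfl) <;> (try ext y) <;> (try push_cast) <;> (try field_simp [hx.ne']) <;> (try ring) <;> (try ring_nf)
  have hSd : ∀ x : ℝ, 0 < x →
      HasDerivAt (fun y : ℝ => Real.sqrt (A + b / y + C / (4 * y ^ 2)))
        ((-b / x ^ 2 - C / (2 * x ^ 3)) / (2 * Real.sqrt (A + b / x + C / (4 * x ^ 2)))) x :=
    fun x hx => (hPd x hx).sqrt (hPpos x hx).ne'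
  have hsne : ∀ x : ℝ, 0 < x → Real.sqrt (A + b / x + C / (4 * x ^ 2)) ≠ 0 :=
    fun x hx => (Real.sqrt_pos.mpr (hPpos x hx)).ne'
  have hVd : ∀ x : ℝ, 0 < x → HasDerivAt (fun x : ℝ => (-A + C / (4 * x ^ 2)) / Real.sqrt (A + b / x + C / (4 * x ^ 2)))
      (((-C / (2 * x ^ 3)) * Real.sqrt (A + b / x + C / (4 * x ^ 2)) -
        (-A + C / (4 * x ^ 2)) * ((-b / x ^ 2 - C / (2 * x ^ 3)) / (2 * Real.sqrt (A + b / x + C / (4 * x ^ 2))))) /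
        Real.sqrt (A + b / x + C / (4 * x ^ 2)) ^ 2) x :=
    fun x hx => (hNd x hx).div (hSd x hx) (hsne x hx)
  have hderivV : ∀ x : ℝ, 0 < x → deriv (fun x : ℝ => (-A + C / (4 * x ^ 2)) / Real.sqrt (A + b / x + C / (4 * x ^ 2))) x = ((2 * (-C / (2 * x ^ 3)) * (A + b / x + C / (4 * x ^ 2)) - (-A + C / (4 * x ^ 2)) * (-b / x ^ 2 - C / (2 * x ^ 3))) / (2 * (A + b / x + C / (4 * x ^ 2)) ^ 2)) * Real.sqrt (A + b / x + C / (4 * x ^ 2)) := by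
    intro x hx
    rw [(hVd x hx).deriv]
    have hxne : x ≠ 0 := hx.ne'
    set s := Real.sqrt (A + b / x + C / (4 * x ^ 2)) with hsdef
    have hs2 : s ^ 2 = A + b / x + C / (4 * x ^ 2) := Real.sq_sqrt (hPpos x hx).le
    have hs : s ≠ 0 := hsne x hx
    rw [← hs2]
    field_simp
  have hGd : ∀ x : ℝ, 0 < x → HasDerivAt (fun y : ℝ => 2 * (-C / (2 * y ^ 3)) * (A + b / y + C / (4 * y ^ 2)) - (-A + C / (4 * y ^ 2)) * (-b / y ^ 2 - C / (2 * y ^ 3))) ((2 * (3 * C / (2 * x ^ 4)) * (A + b / x + C / (4 * x ^ 2)) + 2 * (-C / (2 * x ^ 3)) * (-b / x ^ 2 - C / (2 * x ^ 3)) - ((-C / (2 * x ^ 3)) * (-b / x ^ 2 - C / (2 * x ^ 3)) + (-A + C / (4 * x ^ 2)) * (2 * b / x ^ 3 + 3 * C / (2 * x ^ 4))))) x :=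
    fun x hx =>
      (((hNpd x hx).const_mul 2).mul (hPd x hx)).sub ((hNd x hx).mul (hPpd x hx))
  have hDd : ∀ x : ℝ, 0 < x → HasDerivAt (fun y : ℝ => 2 * (A + b / y + C / (4 * y ^ 2)) ^ 2) (2 * (2 * (A + b / x + C / (4 * x ^ 2)) ^ 1 * (-b / x ^ 2 - C / (2 * x ^ 3)))) x := by
    intro x hx
    have h := ((hPd x hx).pow 2).const_mul (2:ℝ)
    convert h using 1 <;> (try rfl) <;> (try ext y) <;> (try push_cast) <;> (try field_simp [hx.ne']) <;> (try ring) <;> (try ring_nf)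
  have hKd : ∀ x : ℝ, 0 < x → HasDerivAt (fun y : ℝ => (2 * (-C / (2 * y ^ 3)) * (A + b / y + C / (4 * y ^ 2)) - (-A + C / (4 * y ^ 2)) * (-b / y ^ 2 - C / (2 * y ^ 3))) / (2 * (A + b / y + C / (4 * y ^ 2)) ^ 2)) ((((2 * (3 * C / (2 * x ^ 4)) * (A + b / x + C / (4 * x ^ 2)) + 2 * (-C / (2 * x ^ 3)) * (-b / x ^ 2 - C / (2 * x ^ 3)) - ((-C / (2 * x ^ 3)) * (-b / x ^ 2 - C / (2 * x ^ 3)) + (-A + C / (4 * x ^ 2)) * (2 * b / x ^ 3 + 3 * C / (2 * x ^ 4))))) * (2 * (A + b / x + C / (4 * x ^ 2)) ^ 2) - (2 * (-C / (2 * x ^ 3)) * (A + b / x + C / (4 * x ^ 2)) - (-A + C / (4 * x ^ 2)) * (-b / x ^ 2 - C / (2 * x ^ 3))) * (2 * (2 * (A + b / x + C / (4 * x ^ 2)) ^ 1 * (-b / x ^ 2 - C / (2 * x ^ 3))))) / (2 * (A + b / x + C / (4 * x ^ 2)) ^ 2) ^ 2) x := by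
    intro x hx
    refine (hGd x hx).div (hDd x hx) ?_
    have h := hPpos x hx
    positivity
  have hFd : ∀ x : ℝ, 0 < x → HasDerivAt (fun y : ℝ => ((2 * (-C / (2 * y ^ 3)) * (A + b / y + C / (4 * y ^ 2)) - (-A + C / (4 * y ^ 2)) * (-b / y ^ 2 - C / (2 * y ^ 3))) / (2 * (A + b / y + C / (4 * y ^ 2)) ^ 2)) * Real.sqrt (A + b / y + C / (4 * y ^ 2)))
      (((((2 * (3 * C / (2 * x ^ 4)) * (A + b / x + C / (4 * x ^ 2)) + 2 * (-C / (2 * x ^ 3)) * (-b / x ^ 2 - C / (2 * x ^ 3)) - ((-C / (2 * x ^ 3)) * (-b / x ^ 2 - C / (2 * x ^ 3)) + (-A + C / (4 * x ^ 2)) * (2 * b / x ^ 3 + 3 * C / (2 * x ^ 4))))) * (2 * (A + b / x + C / (4 * x ^ 2)) ^ 2) - (2 * (-C / (2 * x ^ 3)) * (A + b / x + C / (4 * x ^ 2)) - (-A + C / (4 * x ^ 2)) * (-b / x ^ 2 - C / (2 * x ^ 3))) * (2 * (2 * (A + b / x + C / (4 * x ^ 2)) ^ 1 * (-b / x ^ 2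 - C / (2 * x ^ 3))))) / (2 * (A + b / x + C / (4 * x ^ 2)) ^ 2) ^ 2) * Real.sqrt (A + b / x + C / (4 * x ^ 2)) +
        ((2 * (-C / (2 * x ^ 3)) * (A + b / x + C / (4 * x ^ 2)) - (-A + C / (4 * x ^ 2)) * (-b / x ^ 2 - C / (2 * x ^ 3))) / (2 * (A + b / x + C / (4 * x ^ 2)) ^ 2)) * ((-b / x ^ 2 - C / (2 * x ^ 3)) / (2 * Real.sqrt (A + b / x + C / (4 * x ^ 2))))) x :=
    fun x hx => (hKd x hx).mul (hSd x hx)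
  have heq : deriv (fun x : ℝ => (-A + C / (4 * x ^ 2)) / Real.sqrt (A + b / x + C / (4 * x ^ 2))) =ᶠ[nhds r] fun y : ℝ => ((2 * (-C / (2 * y ^ 3)) * (A + b / y + C / (4 * y ^ 2)) - (-A + C / (4 * y ^ 2)) * (-b / y ^ 2 - C / (2 * y ^ 3))) / (2 * (A + b / y + C / (4 * y ^ 2)) ^ 2)) * Real.sqrt (A + b / y + C / (4 * y ^ 2)) :=
    Filter.eventuallyEq_of_mem (Ioi_mem_nhds hr) fun y hy => hderivV y hy
  refine ⟨(hVd r hr).differentiableAt,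
    (hFd r hr).differentiableAt.congr_of_eventuallyEq heq, ?_⟩
  rw [heq.deriv_eq, (hFd r hr).deriv, hderivV r hr]
  have hPr := hPpos r hr
  refine RN_alg (A + b / r + C / (4 * r ^ 2)) (-A + C / (4 * r ^ 2)) (-b / r ^ 2 - C / (2 * r ^ 3)) ((2 * (-C / (2 * r ^ 3)) * (A + b / r + C / (4 * r ^ 2)) - (-A + C / (4 * r ^ 2)) * (-b / r ^ 2 - C / (2 * r ^ 3))) / (2 * (A + b / r + C / (4 * r ^ 2)) ^ 2)) ((((2 * (3 * C / (2 * r ^ 4)) * (A + b / r + C / (4 * r ^ 2)) + 2 * (-C / (2 * r ^ 3)) * (-b / r ^ 2 - C / (2 * r ^ 3)) - ((-C / (2 * r ^ 3)) * (-b / r ^ 2 - C / (2 * r ^ 3)) + (-A + C / (4 * r ^ 2)) * (2 * b / r ^ 3 + 3 * C / (2 * r ^ 4))))) * (2 * (A + b / r + C / (4 * r ^ 2)) ^ 2) - (2 * (-C / (2 * r ^ 3)) * (A + b / r + C / (4 * r ^ 2)) - (-A + C / (4 * r ^ 2)) * (-b / r ^ 2 - C / (2 * r ^ 3))) * (2 *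 (2 * (A + b / r + C / (4 * r ^ 2)) ^ 1 * (-b / r ^ 2 - C / (2 * r ^ 3))))) / (2 * (A + b / r + C / (4 * r ^ 2)) ^ 2) ^ 2) q2 r
    (Real.sqrt (A + b / r + C / (4 * r ^ 2))) (hsne r hr) hr.ne' (Real.sq_sqrt hPr.le) ?_
  rw [Real.sq_sqrt hPr.le, hq]
  have h1 : (A + b / r + C / (4 * r ^ 2)) ≠ 0 := hPr.ne'
  field_simp
  ring

/-- The model velocity `V = (−e^{−2t} + e^{2t}(m² − q²)/(4r²))/√P` solves the
radial linearized equation `V'' + (2/r)V' = (3q²/(4r⁴P²))V`, vanishes at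
`r₀ = (√(m² − q²)/2)e^{2t}`, and tends to `−e^{−t}` at infinity. -/
theorem RN_model_velocity_equation (m q t : ℝ) (hq : |q| < m) :
    let P : ℝ → ℝ := fun r =>
      Real.exp (-2 * t) + m / r + Real.exp (2 * t) * (m ^ 2 - q ^ 2) / (4 * r ^ 2)
    let V : ℝ → ℝ := fun r =>
      (-Real.exp (-2 * t) + Real.exp (2 * t) * (m ^ 2 - q ^ 2) / (4 * r ^ 2)) /
        Real.sqrt (P r)
    let r₀ : ℝ := (Real.sqrt (m ^ 2 - q ^ 2) / 2) * Real.exp (2 * t)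
    (∀ r : ℝ, 0 < r →
        DifferentiableAt ℝ V r ∧ DifferentiableAt ℝ (deriv V) r ∧
          deriv (deriv V) r + (2 / r) * deriv V r =
            (3 * q ^ 2 / (4 * r ^ 4 * (P r) ^ 2)) * V r) ∧
      V r₀ = 0 ∧ Tendsto V atTop (nhds (-Real.exp (-t))) := by
  intro P V r₀
  have hm : 0 < m := (abs_nonneg q).trans_lt hq
  have habs := abs_lt.mp hq
  have hd : 0 < m ^ 2 - q ^ 2 := by nlinarith [habs.1, habs.2]
  have hA : 0 < Real.exp (-2 * t) := Real.exp_pos _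
  have hC : 0 < Real.exp (2 * t) * (m ^ 2 - q ^ 2) := mul_pos (Real.exp_pos _) hd
  have hAC : Real.exp (-2 * t) * Real.exp (2 * t) = 1 := by
    rw [← Real.exp_add]; norm_num
  have hqrel : q ^ 2 = m ^ 2 - Real.exp (-2 * t) * (Real.exp (2 * t) * (m ^ 2 - q ^ 2)) := by
    rw [← mul_assoc, hAC]; ring
  refine ⟨fun r hr => RN_aux (Real.exp (-2 * t)) m (Real.exp (2 * t) * (m ^ 2 - q ^ 2))
      (q ^ 2) hA hm hC hqrel r hr, ?_, ?_⟩
  · show (-Real.exp (-2 * t) + Real.exp (2 * t) * (m ^ 2 - q ^ 2) / (4 * r₀ ^ 2)) /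
        Real.sqrt (P r₀) = 0
    have hr₀2 : r₀ ^ 2 = (m ^ 2 - q ^ 2) * Real.exp (2 * t) ^ 2 / 4 := by
      show ((Real.sqrt (m ^ 2 - q ^ 2) / 2) * Real.exp (2 * t)) ^ 2 = _
      rw [mul_pow, div_pow, Real.sq_sqrt hd.le]; ring
    have hnum : -Real.exp (-2 * t) + Real.exp (2 * t) * (m ^ 2 - q ^ 2) / (4 * r₀ ^ 2) = 0 := by
      rw [hr₀2, show (4:ℝ) * ((m ^ 2 - q ^ 2) * Real.exp (2 * t) ^ 2 / 4)
          = (m ^ 2 - q ^ 2) * Real.exp (2 * t) ^ 2 by ring]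
      have hkey : Real.exp (2 * t) * (m ^ 2 - q ^ 2) /
          ((m ^ 2 - q ^ 2) * Real.exp (2 * t) ^ 2) = Real.exp (-2 * t) := by
        rw [eq_comm, eq_div_iff (by positivity)]
        linear_combination (m ^ 2 - q ^ 2) * Real.exp (2 * t) * hAC
      rw [hkey]
      ring
    rw [hnum, zero_div]
  · have h2 : Tendsto (fun r : ℝ => m / r) atTop (nhds 0) :=
      Tendsto.div_atTop tendsto_const_nhds tendsto_id
    have h3 : Tendsto (fun r : ℝ => Real.exp (2 * t) * (m ^ 2 - q ^ 2) / (4 * r ^ 2))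
        atTop (nhds 0) := by
      refine Tendsto.div_atTop tendsto_const_nhds ?_
      exact (tendsto_pow_atTop two_ne_zero).const_mul_atTop (by norm_num)
    have hPt' : Tendsto (fun r : ℝ => Real.exp (-2 * t) + m / r +
        Real.exp (2 * t) * (m ^ 2 - q ^ 2) / (4 * r ^ 2)) atTop
        (nhds (Real.exp (-2 * t) + 0 + 0)) := (tendsto_const_nhds.add h2).add h3
    have hPt : Tendsto P atTop (nhds (Real.exp (-2 * t))) := by
      rwa [show (Real.exp (-2 * t) + 0 + 0 : ℝ) = Real.exp (-2 * t) by ring] at hPt'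
    have hnumt : Tendsto (fun r : ℝ => -Real.exp (-2 * t) +
        Real.exp (2 * t) * (m ^ 2 - q ^ 2) / (4 * r ^ 2)) atTop
        (nhds (-Real.exp (-2 * t))) := by
      have h : Tendsto (fun r : ℝ => -Real.exp (-2 * t) +
          Real.exp (2 * t) * (m ^ 2 - q ^ 2) / (4 * r ^ 2)) atTop
          (nhds (-Real.exp (-2 * t) + 0)) := tendsto_const_nhds.add h3
      rwa [show (-Real.exp (-2 * t) + 0 : ℝ) = -Real.exp (-2 * t) by ring] at h
    have hsqrt : Tendsto (fun r : ℝ => Real.sqrt (P r)) atTop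
        (nhds (Real.sqrt (Real.exp (-2 * t)))) := hPt.sqrt
    have hS : Real.sqrt (Real.exp (-2 * t)) = Real.exp (-t) := by
      rw [show (-2 * t) = (-t) + (-t) by ring, Real.exp_add,
        Real.sqrt_mul_self (Real.exp_pos _).le]
    have hval : -Real.exp (-2 * t) / Real.exp (-t) = -Real.exp (-t) := by
      rw [show (-2 * t) = (-t) + (-t) by ring, Real.exp_add, neg_div, mul_div_assoc,
        div_self (Real.exp_pos _).ne', mul_one]
    have h := hnumt.div hsqrt (by rw [hS]; exact (Real.exp_pos _).ne')
    rw [hS, hval] at h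
    exact h
end

section
/- Let Λ > 0, ε > 0, s ∈ [0, 1], and φ ≥ 0 be real numbers. Then sΛ(ε − sφ)/(sφ + ε)³ + s²Λ²φ² / (8(sφ + ε)⁴) ≥ s(Λ − 8s)/(sφ + ε)². -/
/-- The Young's-inequality step in the interior gradient estimate:
`h'(φ) + h(φ)²/8 ≥ s(Λ − 8s)/(sφ + ε)²` for `h(φ) = sΛφ/(sφ + ε)²`. -/
theorem young_step_gradient_estimate (Λ ε s φ : ℝ) (hΛ : 0 < Λ) (hε : 0 < ε)
    (hs0 : 0 ≤ s) (hs1 : s ≤ 1) (hφ : 0 ≤ φ) :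
    s * (Λ - 8 * s) / (s * φ + ε) ^ 2 ≤
      s * Λ * (ε - s * φ) / (s * φ + ε) ^ 3 +
        s ^ 2 * Λ ^ 2 * φ ^ 2 / (8 * (s * φ + ε) ^ 4) := by
  have hD : 0 < s * φ + ε := by positivity
  rw [← sub_nonneg]
  have h : s * Λ * (ε - s * φ) / (s * φ + ε) ^ 3 +
      s ^ 2 * Λ ^ 2 * φ ^ 2 / (8 * (s * φ + ε) ^ 4) -
      s * (Λ - 8 * s) / (s * φ + ε) ^ 2 =
      (s * (8 * (s * φ + ε) - Λ * φ)) ^ 2 / (8 * (s * φ + ε) ^ 4) := by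
    field_simp
    ring
  rw [h]
  positivity
end
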